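/- For every dimension d ≥ 3 there exist a d×d complex unitary U and phases θ ∈ ℝ^d, defining the maximally coherent state vector ψ = (1/√d)(e^{iθ_1}, …, e^{iθ_d}), such that (d − 1) − C_{l1}(U ψ ψ† U†) > max over j of C_{l1}(U E_jj U†). That is, in dimension d ≥ 3 the l1 de-cohering power of a unitary can strictly exceed its l1 cohering power, so the qubit inequality C_{l1}(U) ≥ D_{l1}(U) fails in higher dimensions. -/

import Mathlib

open Matrix BigOperators ComplexOrder

/-- The l1-coherence of a matrix: the sum of the absolute values of its
off-diagonal entries. -/
noncomputable def Cl1 {n : ℕ} (A : Matrix (Fin n) (Fin n) ℂ) : ℝ :=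
  ∑ i, ∑ j, if i ≠ j then ‖A i j‖ else 0

/-- A density matrix: positive semidefinite with trace 1. -/
def IsDensity {n : ℕ} (ρ : Matrix (Fin n) (Fin n) ℂ) : Prop :=
  ρ.PosSemidef ∧ ρ.trace = 1

/-- A quantum operation (CPTP map) given by a finite family of Kraus operators. -/
def IsQuantumOp {n : ℕ} (Φ : Matrix (Fin n) (Fin n) ℂ → Matrix (Fin n) (Fin n) ℂ) : Prop :=
  ∃ (m : ℕ) (K : Fin m → Matrix (Fin n) (Fin n) ℂ),
    (∑ i, (K i)ᴴ * K i) = 1 ∧ ∀ ρ, Φ ρ = ∑ i, K i * ρ * (K i)ᴴ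

/-- The dephasing map `Δ`, keeping only the diagonal part of a matrix. -/
def Deph {n : ℕ} (A : Matrix (Fin n) (Fin n) ℂ) : Matrix (Fin n) (Fin n) ℂ :=
  Matrix.of fun i j => if i = j then A i j else 0

/-- The outer product `w w†` of a vector with itself. -/
def outer {n : ℕ} (w : Fin n → ℂ) : Matrix (Fin n) (Fin n) ℂ :=
  Matrix.vecMulVec w (star w)

/-! ### Auxiliary lemmas -/

lemma sum_ite_ne' {n : ℕ} (i : Fin n) (f : Fin n → ℝ) :
    (∑ j, if i ≠ j then f j else 0) = (∑ j, f j) - f i := by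
  have h1 : ∀ j, (if i ≠ j then f j else 0) = f j - (if i = j then f j else 0) := by
    intro j; by_cases h : i = j <;> simp [h]
  rw [Finset.sum_congr rfl (fun j _ => h1 j), Finset.sum_sub_distrib,
    Finset.sum_ite_eq Finset.univ i f, if_pos (Finset.mem_univ i)]

lemma Cl1_outer {n : ℕ} (v : Fin n → ℂ) :
    Cl1 (outer v) = (∑ i, ‖v i‖)^2 - ∑ i, (‖v i‖)^2 := by
  have h : ∀ i : Fin n, (∑ j, if i ≠ j then ‖outer v i j‖ else 0)
      = ‖v i‖ * (∑ j, ‖v j‖) - (‖v i‖)^2 := by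
    intro i
    have he : ∀ j, ‖outer v i j‖ = ‖v i‖ * ‖v j‖ := by
      intro j
      simp [outer, Matrix.vecMulVec_apply, norm_mul, Complex.norm_conj]
    rw [Finset.sum_congr rfl (fun j _ => by rw [he j]), sum_ite_ne' i, ← Finset.mul_sum]
    ring
  unfold Cl1
  rw [Finset.sum_congr rfl (fun i _ => h i)]
  rw [Finset.sum_sub_distrib, ← Finset.sum_mul, sq]

lemma conj_std {n : ℕ} (U : Matrix (Fin n) (Fin n) ℂ) (j : Fin n) :
    U * Matrix.single j j 1 * Uᴴ = outer (fun i => U i j) := by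
  ext i k
  simp only [Matrix.mul_apply, Matrix.single, Matrix.conjTranspose_apply, outer,
    Matrix.vecMulVec_apply, Matrix.of_apply, ite_and, mul_ite, ite_mul, mul_one, mul_zero,
    zero_mul, Finset.sum_ite_eq, Finset.mem_univ, if_true, Pi.star_apply]

/-! ### The unitary: a 2×2 Hadamard block plus identity -/

noncomputable def Umat (m : ℕ) : Matrix (Fin (m+3)) (Fin (m+3)) ℂ :=
  Matrix.of fun i j =>
    if i.val = 0 ∧ j.val = 0 then ((Real.sqrt 2)⁻¹ : ℝ)
    else if i.val = 0 ∧ j.val = 1 then ((Real.sqrt 2)⁻¹ : ℝ)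
    else if i.val = 1 ∧ j.val = 0 then ((Real.sqrt 2)⁻¹ : ℝ)
    else if i.val = 1 ∧ j.val = 1 then -(((Real.sqrt 2)⁻¹ : ℝ) : ℂ)
    else if i = j then 1 else 0

lemma Umat_of_ge {m : ℕ} (i j : Fin (m+3)) (h : 2 ≤ i.val ∨ 2 ≤ j.val) :
    Umat m i j = if i = j then 1 else 0 := by
  unfold Umat
  simp only [Matrix.of_apply]
  split_ifs with h1 h2 h3 h4 <;> first | rfl | omega

lemma succsucc_val {m : ℕ} (k : Fin (m+1)) : ((k.succ.succ : Fin (m+3)) : ℕ) = k.val + 2 := rfl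

lemma Umat_00 {m : ℕ} : Umat m 0 0 = (((Real.sqrt 2)⁻¹ : ℝ) : ℂ) := by simp [Umat]
lemma Umat_01 {m : ℕ} : Umat m 0 1 = (((Real.sqrt 2)⁻¹ : ℝ) : ℂ) := by simp [Umat]
lemma Umat_10 {m : ℕ} : Umat m 1 0 = (((Real.sqrt 2)⁻¹ : ℝ) : ℂ) := by simp [Umat]
lemma Umat_11 {m : ℕ} : Umat m 1 1 = -(((Real.sqrt 2)⁻¹ : ℝ) : ℂ) := by simp [Umat]

lemma Umat_tail_lt {m : ℕ} (k : Fin (m+1)) (x : Fin (m+3)) (hx : x.val < 2) :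
    Umat m k.succ.succ x = 0 := by
  rw [Umat_of_ge _ _ (Or.inl (by rw [succsucc_val]; omega))]
  rw [if_neg]
  intro h
  rw [Fin.ext_iff, succsucc_val] at h
  omega

lemma Umat_tail_lt' {m : ℕ} (k : Fin (m+1)) (x : Fin (m+3)) (hx : x.val < 2) :
    Umat m x k.succ.succ = 0 := by
  rw [Umat_of_ge _ _ (Or.inr (by rw [succsucc_val]; omega))]
  rw [if_neg]
  intro h
  rw [Fin.ext_iff, succsucc_val] at h
  omega

lemma Umat_tail_tail {m : ℕ} (k l : Fin (m+1)) :
    Umat m k.succ.succ l.succ.succ = if k = l then 1 else 0 := by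
  rw [Umat_of_ge _ _ (Or.inl (by rw [succsucc_val]; omega))]
  simp [Fin.succ_inj]

lemma fin_cases3 {m : ℕ} (i : Fin (m+3)) :
    i = 0 ∨ i = 1 ∨ ∃ k : Fin (m+1), i = k.succ.succ := by
  rcases Nat.lt_or_ge i.val 1 with h | h
  · exact Or.inl (Fin.ext (by simp only [Fin.val_zero]; omega))
  rcases Nat.lt_or_ge i.val 2 with h2 | h2
  · exact Or.inr (Or.inl (Fin.ext (by simp only [Fin.val_one]; omega)))
  · refine Or.inr (Or.inr ⟨⟨i.val - 2, by omega⟩, Fin.ext ?_⟩)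
    have : (((⟨i.val - 2, by omega⟩ : Fin (m+1))).succ.succ).val = (i.val - 2) + 2 := rfl
    omega

lemma val_zero3 {m : ℕ} : ((0 : Fin (m+3)) : ℕ) = 0 := rfl
lemma val_one3 {m : ℕ} : ((1 : Fin (m+3)) : ℕ) = 1 := rfl

lemma sqrt2_inv_sq : ((Real.sqrt 2)⁻¹ : ℝ) * (Real.sqrt 2)⁻¹ = 1/2 := by
  rw [← mul_inv, Real.mul_self_sqrt (by norm_num)]; norm_num

lemma sum_peel {m : ℕ} (f : Fin (m+3) → ℂ) :
    (∑ x : Fin (m+3), f x) = f 0 + (f 1 + ∑ x : Fin (m+1), f x.succ.succ) := by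
  rw [Fin.sum_univ_succ, Fin.sum_univ_succ]
  simp only [Fin.succ_zero_eq_one]

lemma sum_peelR {m : ℕ} (f : Fin (m+3) → ℝ) :
    (∑ x : Fin (m+3), f x) = f 0 + (f 1 + ∑ x : Fin (m+1), f x.succ.succ) := by
  rw [Fin.sum_univ_succ, Fin.sum_univ_succ]
  simp only [Fin.succ_zero_eq_one]

lemma sq2c : ((Real.sqrt 2 : ℝ) : ℂ) * ((Real.sqrt 2 : ℝ) : ℂ) = 2 := by
  rw [← Complex.ofReal_mul, Real.mul_self_sqrt (by norm_num)]; norm_num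

lemma delta_val_sum {m : ℕ} (ki kj : Fin (m+1)) :
    (∑ x : Fin (m+1), if (x:ℕ) = (kj:ℕ) then (if (x:ℕ) = (ki:ℕ) then (1:ℂ) else 0) else 0)
      = if (ki:ℕ) = (kj:ℕ) then 1 else 0 := by
  simp only [Fin.val_inj]
  rw [Finset.sum_ite_eq' Finset.univ kj (fun x => if x = ki then (1:ℂ) else 0)]
  by_cases h : ki = kj
  · subst h; simp
  · simp [h, Ne.symm h]

lemma Umat_unitary {m : ℕ} : (Umat m)ᴴ * Umat m = 1 := by
  ext i j
  rw [Matrix.mul_apply]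
  simp only [Matrix.conjTranspose_apply]
  rw [sum_peel (fun x => star (Umat m x i) * Umat m x j)]
  rcases fin_cases3 i with hi | hi | ⟨ki, hi⟩ <;>
    rcases fin_cases3 j with hj | hj | ⟨kj, hj⟩ <;>
      subst hi <;> subst hj <;>
  simp [Umat_00, Umat_01, Umat_10, Umat_11, (fun k => Umat_tail_lt (m := m) k 0 (by rw [val_zero3]; omega)), (fun k => Umat_tail_lt (m := m) k 1 (by rw [val_one3]; omega)), (fun k => Umat_tail_lt' (m := m) k 0 (by rw [val_zero3]; omega)), (fun k => Umat_tail_lt' (m := m) k 1 (by rw [val_one3]; omega)), Umat_tail_tail,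
    Matrix.one_apply, Fin.succ_inj, Complex.conj_ofReal, eq_comm, Fin.succ_succ_ne_one, succsucc_val,
    val_zero3, val_one3, Finset.sum_ite_eq', delta_val_sum] <;>
  norm_num [← mul_inv, sq2c]

lemma Umat_t0 {m : ℕ} (k : Fin (m+1)) : Umat m k.succ.succ 0 = 0 :=
  Umat_tail_lt _ _ (by rw [val_zero3]; omega)
lemma Umat_t1 {m : ℕ} (k : Fin (m+1)) : Umat m k.succ.succ 1 = 0 :=
  Umat_tail_lt _ _ (by rw [val_one3]; omega)
lemma Umat_0t {m : ℕ} (k : Fin (m+1)) : Umat m 0 k.succ.succ = 0 :=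
  Umat_tail_lt' _ _ (by rw [val_zero3]; omega)
lemma Umat_1t {m : ℕ} (k : Fin (m+1)) : Umat m 1 k.succ.succ = 0 :=
  Umat_tail_lt' _ _ (by rw [val_one3]; omega)

/-- Cl1 of the conjugated standard basis matrices is at most 1. -/
lemma Umat_col_bound {m : ℕ} (j : Fin (m+3)) :
    Cl1 (Umat m * Matrix.single j j (1:ℂ) * (Umat m)ᴴ) ≤ 1 := by
  rw [conj_std, Cl1_outer]
  have ha0 : (0:ℝ) ≤ (Real.sqrt 2)⁻¹ := by positivity
  rcases fin_cases3 j with hj | hj | ⟨kj, hj⟩ <;> subst hj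
  · rw [sum_peelR (fun i => ‖Umat m i 0‖),
      sum_peelR (fun i => (‖Umat m i 0‖)^2)]
    simp only [Umat_00, Umat_10, Umat_t0, Complex.norm_real, Real.norm_eq_abs, abs_of_nonneg ha0, norm_zero,
      Finset.sum_const_zero, add_zero, ne_eq, OfNat.ofNat_ne_zero, not_false_eq_true, zero_pow]
    nlinarith [sqrt2_inv_sq]
  · rw [sum_peelR (fun i => ‖Umat m i 1‖),
      sum_peelR (fun i => (‖Umat m i 1‖)^2)]
    simp only [Umat_01, Umat_11, Umat_t1, Complex.norm_real, Real.norm_eq_abs, abs_of_nonneg ha0, norm_zero,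
      norm_neg, Finset.sum_const_zero, add_zero, ne_eq, OfNat.ofNat_ne_zero,
      not_false_eq_true, zero_pow]
    nlinarith [sqrt2_inv_sq]
  · rw [sum_peelR (fun i => ‖Umat m i kj.succ.succ‖),
      sum_peelR (fun i => (‖Umat m i kj.succ.succ‖)^2)]
    simp only [Umat_0t, Umat_1t, Umat_tail_tail, norm_zero]
    have hd : ∀ k : Fin (m+1), ‖if k = kj then (1:ℂ) else 0‖
        = if k = kj then 1 else 0 := by
      intro k; split_ifs <;> simp
    have hd2 : ∀ k : Fin (m+1), (‖if k = kj then (1:ℂ) else 0‖)^2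
        = if k = kj then 1 else 0 := by
      intro k; split_ifs <;> simp
    rw [Finset.sum_congr rfl (fun k _ => hd k), Finset.sum_congr rfl (fun k _ => hd2 k),
      Finset.sum_ite_eq' Finset.univ kj (fun _ => (1:ℝ))]
    simp

theorem decohering_power_can_exceed_cohering_power_l1_high_dim
    (d : ℕ) (hd : 3 ≤ d) :
    ∃ U : Matrix (Fin d) (Fin d) ℂ, (Uᴴ * U = 1 ∧ U * Uᴴ = 1) ∧
      ∃ θ : Fin d → ℝ,
        ∀ j : Fin d,
          Cl1 (U * Matrix.single j j (1 : ℂ) * Uᴴ) <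
            (d - 1 : ℝ) -
              Cl1 (outer (U.mulVec
                (fun k => Complex.exp (θ k * Complex.I) / (Real.sqrt d : ℂ)))) := by
  obtain ⟨m, rfl⟩ : ∃ m, d = m + 3 := ⟨d - 3, by omega⟩
  have hs2 : Real.sqrt 2 * Real.sqrt 2 = 2 := Real.mul_self_sqrt (by norm_num)
  have hs0 : (0:ℝ) < Real.sqrt 2 := Real.sqrt_pos.mpr (by norm_num)
  set t : ℝ := Real.sqrt ((m+3 : ℕ) : ℝ) with htdef
  have ht2 : t * t = (m:ℝ) + 3 := by
    rw [htdef, Real.mul_self_sqrt (by positivity)]; push_cast; ring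
  have ht0 : (0:ℝ) < t := Real.sqrt_pos.mpr (by positivity)
  set c : ℝ := t⁻¹ with hcdef
  have hc0 : (0:ℝ) < c := by positivity
  have hct : c * t = 1 := inv_mul_cancel₀ (ne_of_gt ht0)
  refine ⟨Umat m, ⟨Umat_unitary, mul_eq_one_comm.mp Umat_unitary⟩, fun _ => 0, fun j => ?_⟩
  simp only [Complex.ofReal_zero, zero_mul, Complex.exp_zero]
  have hw : (Umat m).mulVec (fun _ : Fin (m+3) => 1 / ((Real.sqrt ((m+3:ℕ) : ℝ)) : ℂ))
      = fun i : Fin (m+3) => if (i:ℕ) = 0 then ((Real.sqrt 2 * c : ℝ) : ℂ)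
          else if (i:ℕ) = 1 then 0 else ((c : ℝ) : ℂ) := by
    funext i
    rw [Matrix.mulVec, dotProduct]
    rw [sum_peel (fun x => Umat m i x * (1 / ((Real.sqrt ((m+3:ℕ) : ℝ)) : ℂ)))]
    rcases fin_cases3 i with hi | hi | ⟨ki, hi⟩ <;> subst hi
    · rw [Umat_00, Umat_01]
      simp only [Umat_0t, zero_mul, Finset.sum_const_zero, add_zero, val_zero3, if_pos rfl]
      rw [← htdef]
      have h2i : (2:ℝ) * (Real.sqrt 2)⁻¹ = Real.sqrt 2 := by
        field_simp
        rw [Real.sq_sqrt (by norm_num)]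
      have hre : ((Real.sqrt 2)⁻¹ : ℝ) * c + ((Real.sqrt 2)⁻¹ : ℝ) * c = Real.sqrt 2 * c := by
        linear_combination c * h2i
      rw [show ((Real.sqrt 2 * c : ℝ) : ℂ)
          = (((Real.sqrt 2)⁻¹ * c + (Real.sqrt 2)⁻¹ * c : ℝ) : ℂ) from by rw [hre]]
      rw [hcdef]
      push_cast
      ring
    · rw [Umat_10, Umat_11]
      simp only [Umat_1t, zero_mul, Finset.sum_const_zero, add_zero, val_one3]
      norm_num
    · rw [Umat_t0, Umat_t1]
      simp only [Umat_tail_tail, zero_mul, zero_add, ite_mul, one_mul,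
        Finset.sum_ite_eq, Finset.mem_univ, if_true]
      rw [if_neg (by rw [succsucc_val]; omega), if_neg (by rw [succsucc_val]; omega), ← htdef]
      rw [hcdef]
      push_cast
      ring
  rw [hw, Cl1_outer]
  rw [sum_peelR (fun i => ‖if (i:ℕ) = 0 then ((Real.sqrt 2 * c : ℝ) : ℂ)
        else if (i:ℕ) = 1 then 0 else ((c : ℝ) : ℂ)‖),
     sum_peelR (fun i => (‖if (i:ℕ) = 0 then ((Real.sqrt 2 * c : ℝ) : ℂ)
        else if (i:ℕ) = 1 then 0 else ((c : ℝ) : ℂ)‖)^2)]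
  have hv0 : ∀ k : Fin (m+1), ((k.succ.succ : Fin (m+3)) : ℕ) ≠ 0 := by
    intro k; rw [succsucc_val]; omega
  have hv1 : ∀ k : Fin (m+1), ((k.succ.succ : Fin (m+3)) : ℕ) ≠ 1 := by
    intro k; rw [succsucc_val]; omega
  have habs1 : ‖((Real.sqrt 2 * c : ℝ) : ℂ)‖ = Real.sqrt 2 * c := by
    rw [Complex.norm_real, Real.norm_eq_abs]; exact abs_of_nonneg (by positivity)
  have habs2 : ‖((c : ℝ) : ℂ)‖ = c := by
    rw [Complex.norm_real, Real.norm_eq_abs]; exact abs_of_nonneg hc0.le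
  have habs3 : |Real.sqrt 2| = Real.sqrt 2 := abs_of_nonneg hs0.le
  simp [val_zero3, val_one3, hv0, hv1, habs1, habs2, habs3, abs_of_pos hc0]
  refine lt_of_le_of_lt (Umat_col_bound j) ?_
  have hcc : c * c * ((m:ℝ) + 3) = 1 := by
    have h1 : c * c * (t * t) = (c * t) * (c * t) := by ring
    rw [← ht2, h1, hct, mul_one]
  have hs32 : Real.sqrt 2 < 3/2 := by nlinarith
  have key : (2 * Real.sqrt 2 + (m:ℝ)) * (c * c) < ((m:ℝ) + 3) * (c * c) := by
    apply mul_lt_mul_of_pos_right _ (by positivity)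
    nlinarith
  have key2 : ((m:ℝ)+1) * ((2*Real.sqrt 2 + (m:ℝ)) * (c*c)) < ((m:ℝ)+1) * 1 := by
    apply mul_lt_mul_of_pos_left _ (by positivity)
    calc (2*Real.sqrt 2 + (m:ℝ)) * (c*c) < ((m:ℝ)+3) * (c*c) := key
      _ = 1 := by linarith [hcc]
  nlinarith [key2, hcc, hs2, hc0.le, hs0.le]
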